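/- Let n ≥ 1 and let T : ℝⁿ → ℝⁿ be monotone and additively homogeneous. If there is no pair (I, J) of disjoint subsets of {1,…,n} such that I is a MIN-dominion for T and J is a MAX-dominion for T, then for all real numbers α ≤ β the additive slice space A_α^β(T) = {x ∈ ℝⁿ : α·e + x ≤ T(x) ≤ β·e + x} is bounded in Hilbert's seminorm, i.e., sup{‖x‖_H : x ∈ A_α^β(T)} < ∞. -/

import Mathlib

/-- `T` is additively homogeneous: `T(x + c·e) = T(x) + c·e`. -/
def AddHomog (n : ℕ) (T : (Fin n → ℝ) → (Fin n → ℝ)) : Prop :=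
  ∀ (x : Fin n → ℝ) (c : ℝ), T (fun i => x i + c) = fun i => T x i + c

/-- `Δ` is a MIN-dominion for `T`: there is `β` with `T_i(t·e_{Δᶜ}) ≤ β`
for all `i ∈ Δ` and all `t ≥ 0`. -/
def MinDominion (n : ℕ) (T : (Fin n → ℝ) → (Fin n → ℝ)) (Δ : Set (Fin n)) : Prop :=
  Δ.Nonempty ∧ ∃ β : ℝ, ∀ i ∈ Δ, ∀ t : ℝ, 0 ≤ t →
    T (Δᶜ.indicator fun _ => t) i ≤ β

/-- `Δ` is a MAX-dominion for `T`: there is `α` with `T_i(−t·e_{Δᶜ}) ≥ α`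
for all `i ∈ Δ` and all `t ≥ 0`. -/
def MaxDominion (n : ℕ) (T : (Fin n → ℝ) → (Fin n → ℝ)) (Δ : Set (Fin n)) : Prop :=
  Δ.Nonempty ∧ ∃ α : ℝ, ∀ i ∈ Δ, ∀ t : ℝ, 0 ≤ t →
    α ≤ T (Δᶜ.indicator fun _ => -t) i

/-- Hilbert's seminorm `‖x‖_H = max_i x_i − min_i x_i`. -/
noncomputable def hilbertSeminorm (n : ℕ) (x : Fin n → ℝ) : ℝ :=
  (⨆ i, x i) - ⨅ i, x i

/-- The additive slice space `A_α^β(T) = {x : α·e + x ≤ T(x) ≤ β·e + x}`. -/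
def addSliceSpace (n : ℕ) (T : (Fin n → ℝ) → (Fin n → ℝ)) (α β : ℝ) : Set (Fin n → ℝ) :=
  {x | ∀ i, α + x i ≤ T x i ∧ T x i ≤ β + x i}

open Filter

private lemma my_exists_max {n : ℕ} [Nonempty (Fin n)] (f : Fin n → ℝ) :
    ∃ j, (⨆ i, f i) = f j ∧ ∀ i, f i ≤ f j := by
  obtain ⟨j, hj⟩ := Finite.exists_max f
  exact ⟨j, le_antisymm (ciSup_le hj) (le_ciSup (Set.finite_range f).bddAbove j), hj⟩

private lemma my_exists_min {n : ℕ} [Nonempty (Fin n)] (f : Fin n → ℝ) :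
    ∃ j, (⨅ i, f i) = f j ∧ ∀ i, f j ≤ f i := by
  obtain ⟨j, hj⟩ := Finite.exists_min f
  exact ⟨j, le_antisymm (ciInf_le (Set.finite_range f).bddBelow j) (le_ciInf hj), hj⟩

private lemma my_freq {n : ℕ} (𝒰 : Ultrafilter ℕ) (w : ℕ → Fin n → ℝ)
    [Nonempty (Fin n)] (h : ∀ m, ∃ i, w m i = 0) :
    ∃ i, ∀ᶠ m in (𝒰 : Filter ℕ), w m i = 0 := by
  by_contra hcon
  push_neg at hcon
  have h1 : ∀ i, ∀ᶠ m in (𝒰 : Filter ℕ), w m i ≠ 0 :=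
    fun i => hcon i
  obtain ⟨m, hm⟩ := (Filter.eventually_all.2 h1).exists
  obtain ⟨i, hi⟩ := h m
  exact hm i hi

private lemma my_not_tendsto {f : ℕ → ℝ} {𝒰 : Ultrafilter ℕ}
    (h : ¬ Tendsto f (𝒰 : Filter ℕ) atTop) :
    ∃ C : ℝ, ∀ᶠ m in (𝒰 : Filter ℕ), f m ≤ C := by
  rw [tendsto_atTop] at h
  push_neg at h
  obtain ⟨b, hb⟩ := h
  refine ⟨b, hb.mono fun m hm => ?_⟩
  exact hm.le

theorem stmt1 (n : ℕ) (hn : 1 ≤ n)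
    (T : (Fin n → ℝ) → (Fin n → ℝ))
    (hmono : Monotone T) (hhom : AddHomog n T)
    (hdom : ¬ ∃ I J : Set (Fin n),
      Disjoint I J ∧ MinDominion n T I ∧ MaxDominion n T J) :
    ∀ α β : ℝ, α ≤ β →
      ∃ M : ℝ, ∀ x ∈ addSliceSpace n T α β, hilbertSeminorm n x ≤ M := by
  intro α β hαβ
  haveI : Nonempty (Fin n) := Fin.pos_iff_nonempty.mp (by omega)
  by_contra hM
  push_neg at hM
  -- hM : ∀ M, ∃ x ∈ addSliceSpace n T α β, M < hilbertSeminorm n x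
  choose x hx hxbig using fun m : ℕ => hM m
  -- normalized sequence
  set u : ℕ → Fin n → ℝ := fun m i => x m i + -(⨅ j, x m j) with hu
  have hxmin : ∀ m, ∃ j, (⨅ i, x m i) = x m j ∧ ∀ i, x m j ≤ x m i :=
    fun m => my_exists_min (x m)
  have hu0 : ∀ m i, 0 ≤ u m i := by
    intro m i
    obtain ⟨j, hj, hjle⟩ := hxmin m
    simp only [hu, hj]
    linarith [hjle i]
  have humem : ∀ m, u m ∈ addSliceSpace n T α β := by
    intro m i
    have := hhom (x m) (-(⨅ j, x m j))
    simp only [hu, this]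
    have h1 := (hx m i).1
    have h2 := (hx m i).2
    constructor <;> linarith
  have humin0 : ∀ m, ∃ j, u m j = 0 := by
    intro m
    obtain ⟨j, hj, _⟩ := hxmin m
    exact ⟨j, by simp [hu, ← hj]⟩
  set s : ℕ → ℝ := fun m => ⨆ i, u m i with hs
  have hsmax : ∀ m, ∃ j, s m = u m j ∧ ∀ i, u m i ≤ u m j :=
    fun m => my_exists_max (u m)
  have hsge : ∀ m : ℕ, (m : ℝ) ≤ s m := by
    intro m
    obtain ⟨j, hj, hjle⟩ := hsmax m
    obtain ⟨j', hj', hj'le⟩ := my_exists_max (x m)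
    have hsx : s m = (⨆ i, x m i) + -(⨅ i, x m i) := by
      rw [hj, hj']
      have h1 : u m j' ≤ u m j := hjle j'
      have h2 : x m j ≤ x m j' := hj'le j
      simp only [hu] at h1 ⊢
      linarith
    have := hxbig m
    rw [hilbertSeminorm] at this
    linarith
  set v : ℕ → Fin n → ℝ := fun m i => u m i + -(s m) with hv
  have hv0 : ∀ m i, v m i ≤ 0 := by
    intro m i
    obtain ⟨j, hj, hjle⟩ := hsmax m
    simp only [hv, hj]
    linarith [hjle i]
  have hvmax0 : ∀ m, ∃ j, v m j = 0 := by
    intro m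
    obtain ⟨j, hj, _⟩ := hsmax m
    exact ⟨j, by simp [hv, ← hj]⟩
  set 𝒰 : Ultrafilter ℕ := Ultrafilter.of atTop with h𝒰
  have hUcof : ∀ N : ℕ, ∀ᶠ m in (𝒰 : Filter ℕ), N ≤ m :=
    fun N => Ultrafilter.of_le atTop (mem_atTop N)
  set I : Set (Fin n) := {i | ¬ Tendsto (fun m => u m i) (𝒰 : Filter ℕ) atTop} with hI
  set J : Set (Fin n) := {j | ¬ Tendsto (fun m => -(v m j)) (𝒰 : Filter ℕ) atTop} with hJ
  -- I nonempty
  have hInone : I.Nonempty := by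
    obtain ⟨i₀, hi₀⟩ := my_freq 𝒰 u humin0
    refine ⟨i₀, fun hT => ?_⟩
    obtain ⟨m, hm1, hm2⟩ := (hi₀.and (hT.eventually (eventually_ge_atTop 1))).exists
    rw [hm1] at hm2; linarith
  -- J nonempty
  have hJnone : J.Nonempty := by
    obtain ⟨j₀, hj₀⟩ := my_freq 𝒰 v hvmax0
    refine ⟨j₀, fun hT => ?_⟩
    obtain ⟨m, hm1, hm2⟩ := (hj₀.and (hT.eventually (eventually_ge_atTop 1))).exists
    rw [hm1] at hm2; norm_num at hm2
  -- disjoint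
  have hdisj : Disjoint I J := by
    rw [Set.disjoint_left]
    intro j hjI hjJ
    obtain ⟨D, hD⟩ := my_not_tendsto hjJ
    apply hjI
    rw [tendsto_atTop]
    intro b
    obtain ⟨N, hN⟩ := exists_nat_ge (b + D)
    filter_upwards [hD, hUcof N] with m h1 h2
    have h3 : (m : ℝ) ≤ s m := hsge m
    have h4 : (N : ℝ) ≤ (m : ℝ) := by exact_mod_cast h2
    have h5 : -(v m j) ≤ D := h1
    simp only [hv] at h5
    linarith
  -- I is a MinDominion
  have hCex : ∀ i : Fin n, ∃ C : ℝ, i ∈ I → ∀ᶠ m in (𝒰 : Filter ℕ), u m i ≤ C := by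
    intro i
    by_cases hi : i ∈ I
    · obtain ⟨C, hC⟩ := my_not_tendsto hi
      exact ⟨C, fun _ => hC⟩
    · exact ⟨0, fun h => absurd h hi⟩
  choose C hC using hCex
  have hminI : MinDominion n T I := by
    refine ⟨hInone, β + Finset.univ.sup' Finset.univ_nonempty C, fun i hi t ht => ?_⟩
    have ev1 : ∀ᶠ m in (𝒰 : Filter ℕ), ∀ j, j ∈ I → u m j ≤ C j := by
      rw [Filter.eventually_all]
      intro j
      by_cases hj : j ∈ I
      · exact (hC j hj).mono fun m h _ => h
      · exact Filter.Eventually.of_forall fun m h => absurd h hj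
    have ev2 : ∀ᶠ m in (𝒰 : Filter ℕ), ∀ j, j ∉ I → t ≤ u m j := by
      rw [Filter.eventually_all]
      intro j
      by_cases hj : j ∈ I
      · exact Filter.Eventually.of_forall fun m h => absurd hj h
      · have hT : Tendsto (fun m => u m j) (𝒰 : Filter ℕ) atTop := not_not.mp hj
        exact (tendsto_atTop.1 hT t).mono fun m h _ => h
    obtain ⟨m, h1, h2⟩ := (ev1.and ev2).exists
    have hle : Iᶜ.indicator (fun _ => t) ≤ u m := by
      intro j
      by_cases hj : j ∈ I
      · rw [Set.indicator_of_notMem (by simpa using hj)]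
        exact hu0 m j
      · rw [Set.indicator_of_mem (by simpa using hj)]
        exact h2 j hj
    calc T (Iᶜ.indicator fun _ => t) i ≤ T (u m) i := hmono hle i
      _ ≤ β + u m i := (humem m i).2
      _ ≤ β + C i := by linarith [h1 i hi]
      _ ≤ β + Finset.univ.sup' Finset.univ_nonempty C := by
          have := Finset.le_sup' C (Finset.mem_univ i); linarith
  -- J is a MaxDominion
  have hDex : ∀ j : Fin n, ∃ D : ℝ, j ∈ J → ∀ᶠ m in (𝒰 : Filter ℕ), -(v m j) ≤ D := by
    intro j
    by_cases hj : j ∈ J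
    · obtain ⟨D, hD⟩ := my_not_tendsto hj
      exact ⟨D, fun _ => hD⟩
    · exact ⟨0, fun h => absurd h hj⟩
  choose D hD using hDex
  have hmaxJ : MaxDominion n T J := by
    refine ⟨hJnone, α - Finset.univ.sup' Finset.univ_nonempty D, fun j hj t ht => ?_⟩
    have ev1 : ∀ᶠ m in (𝒰 : Filter ℕ), ∀ k, k ∈ J → -(v m k) ≤ D k := by
      rw [Filter.eventually_all]
      intro k
      by_cases hk : k ∈ J
      · exact (hD k hk).mono fun m h _ => h
      · exact Filter.Eventually.of_forall fun m h => absurd h hk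
    have ev2 : ∀ᶠ m in (𝒰 : Filter ℕ), ∀ k, k ∉ J → v m k ≤ -t := by
      rw [Filter.eventually_all]
      intro k
      by_cases hk : k ∈ J
      · exact Filter.Eventually.of_forall fun m h => absurd hk h
      · have hT : Tendsto (fun m => -(v m k)) (𝒰 : Filter ℕ) atTop := not_not.mp hk
        exact (tendsto_atTop.1 hT t).mono fun m h _ => by linarith
    obtain ⟨m, h1, h2⟩ := (ev1.and ev2).exists
    have hle : v m ≤ Jᶜ.indicator (fun _ => -t) := by
      intro k
      by_cases hk : k ∈ J
      · rw [Set.indicator_of_notMem (by simpa using hk)]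
        exact hv0 m k
      · rw [Set.indicator_of_mem (by simpa using hk)]
        exact h2 k hk
    have hTv : T (v m) j = T (u m) j + -(s m) := by
      have := hhom (u m) (-(s m))
      simp only [hv, this]
    have key : T (v m) j ≤ T (Jᶜ.indicator fun _ => -t) j := hmono hle j
    have hαj : α + u m j ≤ T (u m) j := (humem m j).1
    have hDj : -(v m j) ≤ D j := h1 j hj
    have hsupD : D j ≤ Finset.univ.sup' Finset.univ_nonempty D :=
      Finset.le_sup' D (Finset.mem_univ j)
    simp only [hv] at hDj
    linarith
  exact hdom ⟨I, J, hdisj, hminI, hmaxJ⟩
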